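/- Let d ≥ 1, ε > 0, and let X : (−ε, ε) → ℝ^d be real-analytic with X' not identically zero on any neighborhood of 0. Then both one-sided limits u₊ = lim_{s→0⁺} X'(s)/|X'(s)| and u₋ = lim_{s→0⁻} X'(s)/|X'(s)| exist, and either u₊ = u₋ or u₊ = −u₋. Consequently, a curve whose tangent direction jumps at a point by an angle strictly between 0 and π (a kink) admits no analytic parametrization. -/

import Mathlib

open Real Filter

/-- For an analytic parametrization, both one-sided limits of the unit tangent
direction at a point exist and are either equal or opposite; hence a kink
(a tangent jump by an angle strictly between 0 and π) is impossible. -/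
theorem stmt_10 (d : ℕ) (hd : 1 ≤ d) (ε : ℝ) (hε : 0 < ε)
    (X : ℝ → EuclideanSpace ℝ (Fin d))
    (hX : AnalyticOnNhd ℝ X (Set.Ioo (-ε) ε))
    (hnz : ∀ δ > (0 : ℝ), ∃ s : ℝ, |s| < δ ∧ deriv X s ≠ 0) :
    ∃ uplus uminus : EuclideanSpace ℝ (Fin d),
      Filter.Tendsto (fun s => ‖deriv X s‖⁻¹ • deriv X s) (nhdsWithin 0 (Set.Ioi 0))
        (nhds uplus) ∧
      Filter.Tendsto (fun s => ‖deriv X s‖⁻¹ • deriv X s) (nhdsWithin 0 (Set.Iio 0))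
        (nhds uminus) ∧
      (uplus = uminus ∨ uplus = -uminus) := by
  -- deriv X is analytic at 0
  have h0 : (0 : ℝ) ∈ Set.Ioo (-ε) ε := by constructor <;> simp [hε, neg_neg] <;> linarith
  have hf : AnalyticAt ℝ (deriv X) 0 := hX.deriv 0 h0
  -- its order is finite
  have hnot : ¬ (∀ᶠ z in nhds (0:ℝ), deriv X z = 0) := by
    intro h
    rcases Metric.eventually_nhds_iff.mp h with ⟨δ, hδ, hδ'⟩
    rcases hnz δ hδ with ⟨s, hs, hs'⟩
    exact hs' (hδ' (by simpa [Real.dist_eq] using hs))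
  have hord : analyticOrderAt (deriv X) 0 ≠ ⊤ := fun h => hnot (analyticOrderAt_eq_top.mp h)
  obtain ⟨n, hn⟩ := Option.ne_none_iff_exists'.mp hord
  obtain ⟨g, hg, hg0, hfg⟩ := (hf.analyticOrderAt_eq_natCast (n := n)).mp hn
  have hfg' : ∀ᶠ z in nhds (0:ℝ), deriv X z = z ^ n • g z := by
    filter_upwards [hfg] with z hz using by simpa using hz
  -- the limit of the normalized g
  set u : EuclideanSpace ℝ (Fin d) := ‖g 0‖⁻¹ • g 0 with hu
  have hgc : ContinuousAt g 0 := hg.continuousAt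
  have hgn : ContinuousAt (fun s => ‖g s‖⁻¹ • g s) 0 := by
    exact ((hgc.norm.inv₀ (by simpa using hg0)).smul hgc)
  refine ⟨u, (-1 : ℝ) ^ n • u, ?_, ?_, ?_⟩
  · -- right limit
    have key : ∀ᶠ s in nhdsWithin (0:ℝ) (Set.Ioi 0),
        ‖deriv X s‖⁻¹ • deriv X s = ‖g s‖⁻¹ • g s := by
      filter_upwards [nhdsWithin_le_nhds hfg', self_mem_nhdsWithin] with s hs hs'
      have hsp : (0:ℝ) < s := hs'
      have hpow : (0:ℝ) < s ^ n := pow_pos hsp n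
      rw [hs, norm_smul, mul_inv, norm_pow, Real.norm_eq_abs, abs_of_pos hsp, smul_smul]
      congr 1
      rw [mul_comm, ← mul_assoc, mul_inv_cancel₀ hpow.ne', one_mul]
    refine Tendsto.congr' (EventuallyEq.symm key) (hgn.tendsto.mono_left nhdsWithin_le_nhds)
  · -- left limit
    have key : ∀ᶠ s in nhdsWithin (0:ℝ) (Set.Iio 0),
        ‖deriv X s‖⁻¹ • deriv X s = (-1:ℝ)^n • (‖g s‖⁻¹ • g s) := by
      filter_upwards [nhdsWithin_le_nhds hfg', self_mem_nhdsWithin] with s hs hs'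
      have hsn : s < 0 := hs'
      have habs : |s| = -s := abs_of_neg hsn
      have hne : |s| ^ n ≠ 0 := pow_ne_zero n (abs_ne_zero.mpr hsn.ne)
      have h1 : s ^ n ≠ 0 := pow_ne_zero n hsn.ne
      have h2 : ((-1:ℝ))^n ≠ 0 := pow_ne_zero n (by norm_num)
      rw [hs, norm_smul, mul_inv, norm_pow, Real.norm_eq_abs, smul_smul, smul_smul]
      congr 1
      have hsp : s ^ n = (-1) ^ n * |s| ^ n := by rw [habs, ← mul_pow]; norm_num
      rw [hsp, mul_comm ((-1:ℝ)^n), ← mul_assoc, mul_assoc _ _ (|s|^n), mul_comm (‖g s‖⁻¹),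
        ← mul_assoc, inv_mul_cancel₀ hne, one_mul, mul_comm]
    have : Tendsto (fun s => (-1:ℝ)^n • (‖g s‖⁻¹ • g s)) (nhdsWithin (0:ℝ) (Set.Iio 0))
        (nhds ((-1:ℝ)^n • u)) :=
      ((hgn.tendsto).const_smul _).mono_left nhdsWithin_le_nhds
    exact Tendsto.congr' (EventuallyEq.symm key) this
  · rcases Nat.even_or_odd n with he | ho
    · left; rw [he.neg_one_pow, one_smul]
    · right; rw [ho.neg_one_pow, neg_one_smul, neg_neg]
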